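/- Let x, x̄, y, z̄ be four strings, each a permutation of the same finite alphabet Σ, and let d = |lcs(x, x̄)|. Then |lcs(y, z̄)| · |lcs(y, x̄)| · |lcs(x, z̄)| ≥ d. In particular, at least one of |lcs(y, z̄)|, |lcs(y, x̄)|, |lcs(x, z̄)| is at least d^{1/3}. -/

import Mathlib

/-- `lcsLen u v` is the length of a longest common subsequence of the strings
(lists) `u` and `v`: the maximum length of a list that is a sublist
(not necessarily contiguous subsequence) of both `u` and `v`. -/
def lcsLen {α : Type*} [DecidableEq α] (u v : List α) : ℕ :=
  ((u.sublists.filter (fun t => decide (t.Sublist v))).map List.length).foldr max 0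

namespace LcsAux

lemma foldr_max_mem_or_zero (L : List ℕ) : L.foldr max 0 = 0 ∨ L.foldr max 0 ∈ L := by
  induction L with
  | nil => exact Or.inl rfl
  | cons a L ih =>
    rcases max_choice a (L.foldr max 0) with h | h
    · right; rw [List.foldr_cons, h]; exact List.mem_cons_self
    · rw [List.foldr_cons, h]
      rcases ih with h0 | hm
      · exact Or.inl h0
      · exact Or.inr (List.mem_cons_of_mem _ hm)

lemma le_foldr_max {a : ℕ} {L : List ℕ} (h : a ∈ L) : a ≤ L.foldr max 0 := by
  induction L with
  | nil => simp at h
  | cons b L ih =>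
    rcases List.mem_cons.1 h with rfl | h
    · exact le_max_left _ _
    · exact le_trans (ih h) (le_max_right _ _)

variable {α : Type*} [DecidableEq α]

lemma length_le_lcsLen {t u v : List α} (h1 : t.Sublist u) (h2 : t.Sublist v) :
    t.length ≤ lcsLen u v := by
  apply le_foldr_max
  exact List.mem_map_of_mem (List.mem_filter.2 ⟨List.mem_sublists.2 h1, by simpa using h2⟩)

lemma exists_lcs_witness (u v : List α) :
    ∃ t : List α, t.Sublist u ∧ t.Sublist v ∧ t.length = lcsLen u v := by
  have H := foldr_max_mem_or_zero ((u.sublists.filter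
      (fun t => decide (t.Sublist v))).map List.length)
  rcases H with h | h
  · exact ⟨[], List.nil_sublist _, List.nil_sublist _, by simpa [lcsLen] using h.symm⟩
  · obtain ⟨t, ht, hlen⟩ := List.mem_map.1 h
    have h2 := List.mem_filter.1 ht
    exact ⟨t, List.mem_sublists.1 h2.1, by simpa using h2.2, hlen⟩

def pfx (u : List α) (c : α) : List α := u.take (u.idxOf c + 1)

lemma pfx_sublist (u : List α) (c : α) : (pfx u c).Sublist u := List.take_sublist _ _

lemma singleton_sublist_pfx {u : List α} {c : α} (h : c ∈ u) : [c].Sublist (pfx u c) := by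
  rw [List.singleton_sublist]
  have hi : u.idxOf c < u.length := List.idxOf_lt_length_iff.2 h
  have hlen : u.idxOf c < (pfx u c).length := by
    simp [pfx, List.length_take]
    omega
  have h2 : (pfx u c)[u.idxOf c]'hlen = u[u.idxOf c]'hi := List.getElem_take ..
  have h3 := List.getElem_mem hlen
  rwa [h2, List.getElem_idxOf hi] at h3

lemma pfx_append_sublist {u : List α} {c c' : α} (hc' : c' ∈ u)
    (h : u.idxOf c < u.idxOf c') : (pfx u c ++ [c']).Sublist (pfx u c') := by
  have hj : u.idxOf c' < u.length := List.idxOf_lt_length_iff.2 hc'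
  have h1 : (pfx u c).Sublist (u.take (u.idxOf c')) := by
    have : pfx u c = (u.take (u.idxOf c')).take (u.idxOf c + 1) := by
      rw [List.take_take, min_eq_left (by omega)]; rfl
    rw [this]; exact List.take_sublist _ _
  have h2 : u.take (u.idxOf c') ++ [c'] = pfx u c' := by
    rw [pfx, List.take_succ]
    congr 1
    rw [List.getElem?_eq_getElem hj, List.getElem_idxOf hj]
    rfl
  calc (pfx u c ++ [c']).Sublist (u.take (u.idxOf c') ++ [c']) := h1.append_right _
    _ = pfx u c' := h2

end LcsAux

namespace LcsAux2
open LcsAux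
variable {α : Type*} [DecidableEq α]

lemma one_le_f {u v : List α} {c : α} (hcu : c ∈ u) (hcv : c ∈ v) :
    1 ≤ lcsLen (pfx u c) (pfx v c) := by
  have := length_le_lcsLen (singleton_sublist_pfx hcu) (singleton_sublist_pfx hcv)
  simpa using this

lemma f_le {u v : List α} (c : α) : lcsLen (pfx u c) (pfx v c) ≤ lcsLen u v := by
  obtain ⟨t, h1, h2, h3⟩ := exists_lcs_witness (pfx u c) (pfx v c)
  rw [← h3]
  exact length_le_lcsLen (h1.trans (pfx_sublist u c)) (h2.trans (pfx_sublist v c))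

lemma f_lt {u v : List α} {c c' : α} (hc'u : c' ∈ u) (hc'v : c' ∈ v)
    (hu : u.idxOf c < u.idxOf c') (hv : v.idxOf c < v.idxOf c') :
    lcsLen (pfx u c) (pfx v c) < lcsLen (pfx u c') (pfx v c') := by
  obtain ⟨t, h1, h2, h3⟩ := exists_lcs_witness (pfx u c) (pfx v c)
  have hu' : (t ++ [c']).Sublist (pfx u c') :=
    (h1.append_right _).trans (pfx_append_sublist hc'u hu)
  have hv' : (t ++ [c']).Sublist (pfx v c') :=
    (h2.append_right _).trans (pfx_append_sublist hc'v hv)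
  have := length_le_lcsLen hu' hv'
  simp only [List.length_append, List.length_cons, List.length_nil] at this
  omega

lemma sublist_indexOf_lt {w u : List α} (h : w.Sublist u) (hu : u.Nodup) :
    ∀ {c c' : α}, c ∈ w → c' ∈ w → w.idxOf c < w.idxOf c' →
      u.idxOf c < u.idxOf c' := by
  induction h with
  | slnil => intro c c' hc _ _; simp at hc
  | @cons l₁ l₂ a h ih =>
    intro c c' hc hc' hlt
    have hl : l₂.Nodup := (List.nodup_cons.1 hu).2
    have ha : a ∉ l₂ := (List.nodup_cons.1 hu).1
    have hcne : c ≠ a := fun e => ha (e ▸ h.subset hc)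
    have hc'ne : c' ≠ a := fun e => ha (e ▸ h.subset hc')
    rw [List.idxOf_cons_ne _ (Ne.symm hcne), List.idxOf_cons_ne _ (Ne.symm hc'ne)]
    have := ih hl hc hc' hlt
    omega
  | @cons_cons l₁ l₂ a h ih =>
    intro c c' hc hc' hlt
    have hl : l₂.Nodup := (List.nodup_cons.1 hu).2
    have ha : a ∉ l₂ := (List.nodup_cons.1 hu).1
    by_cases hc'a : c' = a
    · subst hc'a
      rw [List.idxOf_cons_self] at hlt
      omega
    by_cases hca : c = a
    · subst hca
      rw [List.idxOf_cons_self, List.idxOf_cons_ne _ (Ne.symm hc'a)]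
      omega
    · have hcw : c ∈ l₁ := (List.mem_cons.1 hc).resolve_left hca
      have hc'w : c' ∈ l₁ := (List.mem_cons.1 hc').resolve_left hc'a
      rw [List.idxOf_cons_ne _ (Ne.symm hca), List.idxOf_cons_ne _ (Ne.symm hc'a)] at hlt
      rw [List.idxOf_cons_ne _ (Ne.symm hca), List.idxOf_cons_ne _ (Ne.symm hc'a)]
      have := ih hl hcw hc'w (by omega)
      omega

/-- order agreement: if `w` is a common sublist of nodup `x` and `xb`, the relative
order of two elements of `w` in `x` matches that in `xb`. -/
lemma order_agree {w x xb : List α} (hwx : w.Sublist x) (hwxb : w.Sublist xb)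
    (hx : x.Nodup) (hxb : xb.Nodup) {c c' : α} (hc : c ∈ w) (hc' : c' ∈ w)
    (h : xb.idxOf c < xb.idxOf c') : x.idxOf c < x.idxOf c' := by
  rcases lt_trichotomy (w.idxOf c) (w.idxOf c') with hw | hw | hw
  · exact sublist_indexOf_lt hwx hx hc hc' hw
  · have : c = c' := by
      have := List.idxOf_inj (y := c') hc
      exact this.1 hw
    subst this
    omega
  · have := sublist_indexOf_lt hwxb hxb hc' hc hw
    omega

end LcsAux2

namespace LcsAux3
open LcsAux LcsAux2
variable {α : Type*} [DecidableEq α]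

lemma inj_helper {x xb y zb w : List α}
    (hxnd : x.Nodup) (hxbnd : xb.Nodup)
    (hwx : w.Sublist x) (hwxb : w.Sublist xb)
    (hxall : ∀ e : α, e ∈ x) (hyall : ∀ e : α, e ∈ y)
    (hzball : ∀ e : α, e ∈ zb) (hxball : ∀ e : α, e ∈ xb)
    {c c' : α} (hc : c ∈ w) (hc' : c' ∈ w)
    (h1 : lcsLen (pfx y c) (pfx zb c) = lcsLen (pfx y c') (pfx zb c'))
    (h2 : lcsLen (pfx y c) (pfx xb c) = lcsLen (pfx y c') (pfx xb c'))
    (h3 : lcsLen (pfx x c) (pfx zb c) = lcsLen (pfx x c') (pfx zb c'))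
    (hy : y.idxOf c < y.idxOf c') : False := by
  rcases lt_trichotomy (zb.idxOf c) (zb.idxOf c') with hz | hz | hz
  · exact absurd h1 (ne_of_lt (f_lt (hyall c') (hzball c') hy hz))
  · have : c = c' := (List.idxOf_inj (hzball c)).1 hz
    subst this; omega
  · rcases lt_trichotomy (xb.idxOf c) (xb.idxOf c') with hb | hb | hb
    · exact absurd h2 (ne_of_lt (f_lt (hyall c') (hxball c') hy hb))
    · have : c = c' := (List.idxOf_inj (hxball c)).1 hb
      subst this; omega
    · have hx' : x.idxOf c' < x.idxOf c :=
        order_agree hwx hwxb hxnd hxbnd hc' hc hb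
      exact absurd h3.symm (ne_of_lt (f_lt (hxall c) (hzball c) hx' hz))

end LcsAux3

open LcsAux LcsAux2 LcsAux3

/-- **triple inequality from the proof of Lemma 11.** Let `x, x̄, y, z̄`
be four strings, each a permutation of the same finite alphabet `Σ`, and let
`d = |lcs(x, x̄)|`. Then `|lcs(y, z̄)| · |lcs(y, x̄)| · |lcs(x, z̄)| ≥ d`; in particular,
at least one of `|lcs(y, z̄)|, |lcs(y, x̄)|, |lcs(x, z̄)|` is at least `d^{1/3}`. -/
theorem lcs_quadruple_triple_inequality {α : Type*} [Fintype α] [DecidableEq α]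
    (x xb y zb : List α)
    (hxnd : x.Nodup) (hxall : ∀ c : α, c ∈ x)
    (hxbnd : xb.Nodup) (hxball : ∀ c : α, c ∈ xb)
    (hynd : y.Nodup) (hyall : ∀ c : α, c ∈ y)
    (hzbnd : zb.Nodup) (hzball : ∀ c : α, c ∈ zb)
    (d : ℕ) (hd : d = lcsLen x xb) :
    d ≤ lcsLen y zb * lcsLen y xb * lcsLen x zb ∧
      (d : ℝ) ^ ((1 : ℝ) / 3) ≤
        max (lcsLen y zb : ℝ) (max (lcsLen y xb : ℝ) (lcsLen x zb : ℝ)) := by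
  obtain ⟨w, hwx, hwxb, hwlen⟩ := exists_lcs_witness x xb
  have hwnd : w.Nodup := hwx.nodup hxnd
  set a := lcsLen y zb with ha
  set b := lcsLen y xb with hb
  set e := lcsLen x zb with he
  have key : d ≤ a * b * e := by
    have hcard : d = w.toFinset.card := by
      rw [hd, ← hwlen, List.toFinset_card_of_nodup hwnd]
    set F : α → ℕ × ℕ × ℕ := fun c =>
      (lcsLen (pfx y c) (pfx zb c), lcsLen (pfx y c) (pfx xb c),
        lcsLen (pfx x c) (pfx zb c)) with hF
    have hmaps : ∀ c ∈ w.toFinset,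
        F c ∈ Finset.Icc 1 a ×ˢ (Finset.Icc 1 b ×ˢ Finset.Icc 1 e) := by
      intro c _
      simp only [Finset.mem_product, Finset.mem_Icc, hF]
      exact ⟨⟨one_le_f (hyall c) (hzball c), f_le c⟩,
        ⟨one_le_f (hyall c) (hxball c), f_le c⟩,
        ⟨one_le_f (hxall c) (hzball c), f_le c⟩⟩
    have hinj : Set.InjOn F w.toFinset := by
      intro c hcm c' hc'm hFeq
      have hc : c ∈ w := List.mem_toFinset.1 hcm
      have hc' : c' ∈ w := List.mem_toFinset.1 hc'm
      have h1 : lcsLen (pfx y c) (pfx zb c) = lcsLen (pfx y c') (pfx zb c') :=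
        congrArg Prod.fst hFeq
      have h2 : lcsLen (pfx y c) (pfx xb c) = lcsLen (pfx y c') (pfx xb c') :=
        congrArg (Prod.fst ∘ Prod.snd) hFeq
      have h3 : lcsLen (pfx x c) (pfx zb c) = lcsLen (pfx x c') (pfx zb c') :=
        congrArg (Prod.snd ∘ Prod.snd) hFeq
      rcases lt_trichotomy (y.idxOf c) (y.idxOf c') with hy' | hy' | hy'
      · exact absurd (inj_helper hxnd hxbnd hwx hwxb hxall hyall hzball hxball
          hc hc' h1 h2 h3 hy') (by simp)
      · exact (List.idxOf_inj (hyall c)).1 hy'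
      · exact absurd (inj_helper hxnd hxbnd hwx hwxb hxall hyall hzball hxball
          hc' hc h1.symm h2.symm h3.symm hy') (by simp)
    have hle := Finset.card_le_card_of_injOn F hmaps hinj
    rw [Finset.card_product, Finset.card_product, Nat.card_Icc, Nat.card_Icc,
      Nat.card_Icc] at hle
    simp only [Nat.add_sub_cancel] at hle
    calc d = w.toFinset.card := hcard
      _ ≤ a * (b * e) := hle
      _ = a * b * e := (mul_assoc a b e).symm
  refine ⟨key, ?_⟩
  set M := max (a : ℝ) (max (b : ℝ) (e : ℝ)) with hM
  have hM0 : (0 : ℝ) ≤ M := le_trans (Nat.cast_nonneg a) (le_max_left _ _)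
  have hax : (a : ℝ) ≤ M := le_max_left _ _
  have hbx : (b : ℝ) ≤ M := le_trans (le_max_left _ _) (le_max_right _ _)
  have hex : (e : ℝ) ≤ M := le_trans (le_max_right _ _) (le_max_right _ _)
  have hprod : (d : ℝ) ≤ M ^ 3 := by
    have hd' : (d : ℝ) ≤ (a : ℝ) * (b : ℝ) * (e : ℝ) := by exact_mod_cast key
    have h1 : (a : ℝ) * (b : ℝ) ≤ M * M :=
      mul_le_mul hax hbx (Nat.cast_nonneg _) hM0
    have h2 : (a : ℝ) * (b : ℝ) * (e : ℝ) ≤ M * M * M :=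
      mul_le_mul h1 hex (Nat.cast_nonneg _) (mul_nonneg hM0 hM0)
    calc (d : ℝ) ≤ (a : ℝ) * (b : ℝ) * (e : ℝ) := hd'
      _ ≤ M * M * M := h2
      _ = M ^ 3 := by ring
  calc (d : ℝ) ^ ((1 : ℝ) / 3) ≤ (M ^ 3) ^ ((1 : ℝ) / 3) :=
        Real.rpow_le_rpow (Nat.cast_nonneg d) hprod (by norm_num)
    _ = M := by
        rw [← Real.rpow_natCast M 3, ← Real.rpow_mul hM0]
        norm_num
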